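/- Let a_1,...,a_d be positive integers, α_0 = (1/a_1,...,1/a_d), S = {x ∈ R^d : x ≥ 0, ⟨x, α_0⟩ ≤ 1}, P = conv(v_1,...,v_s) where v_i = a_i e_i for i ≤ d and ⟨v_i, α_0⟩ < 1 for d < i ≤ s (v_i ∈ N^d), and Q = Q_+^d + P. Then P = S ∩ Q. -/

import Mathlib

open Pointwise

/-- With `v i = a i • e i` for `i ≤ d` (the `a i` positive integers),
`v i ∈ ℕ^d` with `⟨v i, α₀⟩ < 1` for `d < i ≤ s`, where `α₀ = (1/a 1, …, 1/a d)`,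
`P = conv(v 1, …, v s)`, `S = {x : x ≥ 0, ⟨x, α₀⟩ ≤ 1}` and `Q = ℚ₊^d + P`,
one has `P = S ∩ Q`. -/
theorem polytope_eq_simplex_inter_polyhedron (d s : ℕ) (hds : d ≤ s)
    (a : Fin d → ℕ) (ha : ∀ i, 0 < a i)
    (v : Fin s → (Fin d → ℚ))
    (hv1 : ∀ i : Fin d, v (Fin.castLE hds i) = Pi.single i (a i : ℚ))
    (hvnat : ∀ i j, ∃ m : ℕ, v i j = (m : ℚ))
    (hlt : ∀ i : Fin s, d ≤ (i : ℕ) → ∑ j, v i j / (a j : ℚ) < 1) :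
    convexHull ℚ (Set.range v) =
      {x : Fin d → ℚ | (∀ j, 0 ≤ x j) ∧ ∑ j, x j / (a j : ℚ) ≤ 1} ∩
        ({x : Fin d → ℚ | ∀ j, 0 ≤ x j} + convexHull ℚ (Set.range v)) := by
  have haQ : ∀ j : Fin d, (0:ℚ) < (a j : ℚ) := fun j => by exact_mod_cast ha j
  have haQ' : ∀ j : Fin d, (a j : ℚ) ≠ 0 := fun j => ne_of_gt (haQ j)
  -- S is convex
  have hconv : Convex ℚ {x : Fin d → ℚ | (∀ j, 0 ≤ x j) ∧ ∑ j, x j / (a j : ℚ) ≤ 1} := by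
    intro x hx y hy α β hα hβ hαβ
    refine ⟨fun j => ?_, ?_⟩
    · simp only [Pi.add_apply, Pi.smul_apply, smul_eq_mul]
      exact add_nonneg (mul_nonneg hα (hx.1 j)) (mul_nonneg hβ (hy.1 j))
    · have : ∑ j, (α • x + β • y) j / (a j : ℚ)
          = α * ∑ j, x j / (a j : ℚ) + β * ∑ j, y j / (a j : ℚ) := by
        rw [Finset.mul_sum, Finset.mul_sum, ← Finset.sum_add_distrib]
        refine Finset.sum_congr rfl fun j _ => ?_
        simp only [Pi.add_apply, Pi.smul_apply, smul_eq_mul]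
        field_simp
      rw [this]
      nlinarith [hx.2, hy.2]
  -- the vertices lie in S
  have hvS : Set.range v ⊆ {x : Fin d → ℚ | (∀ j, 0 ≤ x j) ∧ ∑ j, x j / (a j : ℚ) ≤ 1} := by
    rintro _ ⟨i, rfl⟩
    refine ⟨fun j => ?_, ?_⟩
    · obtain ⟨m, hm⟩ := hvnat i j
      rw [hm]; positivity
    · rcases lt_or_ge (i : ℕ) d with h | h
      · have hcast : Fin.castLE hds ⟨(i : ℕ), h⟩ = i := Fin.ext rfl
        rw [← hcast, hv1]
        rw [Finset.sum_eq_single (⟨(i : ℕ), h⟩ : Fin d)]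
        · rw [Pi.single_eq_same, div_self (haQ' _)]
        · intro b _ hb
          rw [Pi.single_eq_of_ne hb, zero_div]
        · intro hmem; exact absurd (Finset.mem_univ _) hmem
      · exact le_of_lt (hlt i h)
  have hPS := convexHull_min hvS hconv
  apply Set.Subset.antisymm
  · intro x hx
    refine ⟨hPS hx, ?_⟩
    have h0 : (0 : Fin d → ℚ) ∈ {x : Fin d → ℚ | ∀ j, 0 ≤ x j} := fun j => le_refl 0
    have := Set.add_mem_add h0 hx
    rwa [zero_add] at this
  · rintro x ⟨⟨hx0, hxsum⟩, hxQ⟩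
    rw [Set.mem_add] at hxQ
    obtain ⟨q, hq, p, hp, rfl⟩ := hxQ
    have hp0 : ∀ j, 0 ≤ p j := (hPS hp).1
    have hpsum : ∑ j, p j / (a j : ℚ) ≤ 1 := (hPS hp).2
    have hq0 : ∀ j, 0 ≤ q j := hq
    set fp := ∑ j, p j / (a j : ℚ) with hfp
    set fq := ∑ j, q j / (a j : ℚ) with hfq
    have hsplit : ∑ j, (q + p) j / (a j : ℚ) = fq + fp := by
      rw [hfq, hfp, ← Finset.sum_add_distrib]
      exact Finset.sum_congr rfl fun j _ => by
        simp only [Pi.add_apply]; rw [add_div]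
    have hsum1 : fq + fp ≤ 1 := by rw [← hsplit]; exact hxsum
    have hfq0 : 0 ≤ fq :=
      Finset.sum_nonneg fun j _ => div_nonneg (hq0 j) (le_of_lt (haQ j))
    rcases eq_or_lt_of_le hfq0 with hfqz | hfqpos
    · -- q = 0
      have hq0' : ∀ j, q j = 0 := by
        intro j
        have := (Finset.sum_eq_zero_iff_of_nonneg
          (fun j _ => div_nonneg (hq0 j) (le_of_lt (haQ j)))).mp hfqz.symm j (Finset.mem_univ j)
        rcases div_eq_zero_iff.mp this with h | h
        · exact h
        · exact absurd h (haQ' j)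
      have : q + p = p := by funext k; simp [hq0' k]
      rw [this]; exact hp
    · have hfp1 : fp < 1 := by linarith
      have h1fp : (0:ℚ) < 1 - fp := by linarith
      set t : ℚ := fq / (1 - fp) with htdef
      have ht0 : 0 < t := div_pos hfqpos h1fp
      have ht1 : t ≤ 1 := by
        rw [htdef, div_le_one h1fp]; linarith
      have htne : t ≠ 0 := ne_of_gt ht0
      clear_value t
      set w : Fin d → ℚ := fun j => (q j + t * p j) / ((a j : ℚ) * t) with hwdef
      have hw0 : ∀ j, 0 ≤ w j := fun j =>
        div_nonneg (add_nonneg (hq0 j) (mul_nonneg (le_of_lt ht0) (hp0 j)))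
          (mul_nonneg (le_of_lt (haQ j)) (le_of_lt ht0))
      have hwsum : ∑ j, w j = 1 := by
        have hterm : ∀ j : Fin d, w j = (q j / (a j : ℚ)) / t + p j / (a j : ℚ) := by
          intro j
          rw [hwdef]
          field_simp [htne, haQ' j]
        have : ∑ j, w j = fq / t + fp := by
          rw [hfq, hfp, Finset.sum_div, ← Finset.sum_add_distrib]
          exact Finset.sum_congr rfl fun j _ => hterm j
        rw [this]
        have : fq / t = 1 - fp := by
          rw [htdef, div_div_eq_mul_div, mul_comm fq (1 - fp), mul_div_assoc,
            div_self (ne_of_gt hfqpos), mul_one]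
        rw [this]; ring
      -- r is a convex combination of the simplex vertices
      have hrmem : (∑ j : Fin d, w j • v (Fin.castLE hds j)) ∈ convexHull ℚ (Set.range v) := by
        refine (convex_convexHull ℚ (Set.range v)).sum_mem (fun j _ => hw0 j) hwsum
          fun j _ => subset_convexHull ℚ _ ⟨Fin.castLE hds j, rfl⟩
      have hreq : (∑ j : Fin d, w j • v (Fin.castLE hds j)) = fun k => q k / t + p k := by
        funext k
        have : ∀ j : Fin d, (w j • v (Fin.castLE hds j)) k
            = w j * (Pi.single j ((a j : ℚ)) : Fin d → ℚ) k := by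
          intro j; rw [hv1 j]; simp
        simp only [Finset.sum_apply]
        rw [Finset.sum_congr rfl fun j _ => this j]
        rw [Finset.sum_eq_single k]
        · rw [Pi.single_eq_same, hwdef]
          field_simp [htne, haQ' k]
        · intro b _ hb
          rw [Pi.single_eq_of_ne (Ne.symm hb), mul_zero]
        · intro hmem; exact absurd (Finset.mem_univ _) hmem
      rw [hreq] at hrmem
      have hfinal : q + p = (1 - t) • p + t • (fun k => q k / t + p k) := by
        funext k
        simp only [Pi.add_apply, Pi.smul_apply, smul_eq_mul]
        field_simp [htne]
        ring
      rw [hfinal]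
      exact (convex_convexHull ℚ (Set.range v)) hp hrmem (by linarith) (le_of_lt ht0)
        (by ring)
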